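/- Let A₃ > 0 satisfy A₃‖X − Y‖₁² ≤ ‖A(X) − A(Y)‖² for all X ∈ S^{1,1} and Y ∈ S^{1,0}. Fix λ, μ ≥ 0, x ∈ ℂⁿ, ν ∈ ℝ^m, and set y = α(x) + ν. If u, v ∈ ℂⁿ satisfy J(u,v,λ,μ) ≤ J(x,x,λ,μ), then ‖[u,v] − xx*‖₁ ≤ 2λ/A₃ + 2√( λ²/A₃² + ‖ν‖²/A₃ ) ≤ 4λ/A₃ + 2‖ν‖/√A₃. -/

import Mathlib

open scoped BigOperators ComplexConjugate
open Matrix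

noncomputable section

/-- Inner product on `ℂⁿ`, linear in the first argument: `⟨x,y⟩ = ∑ⱼ xⱼ conj(yⱼ)`. -/
def cip {n : ℕ} (x y : Fin n → ℂ) : ℂ := ∑ j, x j * (starRingEnd ℂ) (y j)

/-- Squared Euclidean norm on `ℂⁿ`. -/
def cnSq {n : ℕ} (x : Fin n → ℂ) : ℝ := ∑ j, Complex.normSq (x j)

/-- The phaseless measurement map `α(x)ₖ = |⟨x,fₖ⟩|²`. -/
def alphaMap {n m : ℕ} (f : Fin m → Fin n → ℂ) (x : Fin n → ℂ) : Fin m → ℝ :=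
  fun k => Complex.normSq (cip x (f k))

/-- `α` is injective up to a global phase. -/
def InjUpToPhase {n m : ℕ} (f : Fin m → Fin n → ℂ) : Prop :=
  ∀ x y : Fin n → ℂ, alphaMap f x = alphaMap f y → ∃ c : ℂ, ‖c‖ = 1 ∧ y = c • x
/-- Number of strictly positive eigenvalues (with multiplicity) of a Hermitian matrix. -/
def posCount {n : ℕ} {𝕜 : Type*} [RCLike 𝕜] {X : Matrix (Fin n) (Fin n) 𝕜}
    (hX : X.IsHermitian) : ℕ :=
  Nat.card {i // 0 < hX.eigenvalues i}

/-- Number of strictly negative eigenvalues (with multiplicity) of a Hermitian matrix. -/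
def negCount {n : ℕ} {𝕜 : Type*} [RCLike 𝕜] {X : Matrix (Fin n) (Fin n) 𝕜}
    (hX : X.IsHermitian) : ℕ :=
  Nat.card {i // hX.eigenvalues i < 0}

/-- Nuclear norm of a Hermitian matrix: sum of absolute values of eigenvalues. -/
def nucNorm {n : ℕ} {𝕜 : Type*} [RCLike 𝕜] {X : Matrix (Fin n) (Fin n) 𝕜}
    (hX : X.IsHermitian) : ℝ :=
  ∑ i, |hX.eigenvalues i|

/-- Rank-one operator `u v*`, with entries `uᵢ conj(vⱼ)`. -/
def outer {n : ℕ} (u v : Fin n → ℂ) : Matrix (Fin n) (Fin n) ℂ :=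
  Matrix.vecMulVec u (star v)

/-- Symmetric outer product `[u,v] = ½(uv* + vu*)`. -/
def symOuter {n : ℕ} (u v : Fin n → ℂ) : Matrix (Fin n) (Fin n) ℂ :=
  (1/2 : ℂ) • (outer u v + outer v u)

/-- The linear map `A` on Hermitian matrices, `A(T)ₖ = ⟨Tfₖ,fₖ⟩`. -/
def AcMap {n m : ℕ} (f : Fin m → Fin n → ℂ) (X : Matrix (Fin n) (Fin n) ℂ) : Fin m → ℝ :=
  fun k => (cip (X.mulVec (f k)) (f k)).re

/-- The regularized least-square criterion
`J(u,v,λ,μ) = ∑ₖ|yₖ − ½(⟨u,fₖ⟩⟨fₖ,v⟩+⟨v,fₖ⟩⟨fₖ,u⟩)|² + λ‖u‖² + μ‖u−v‖² + λ‖v‖²`. -/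
def Jfun {n m : ℕ} (f : Fin m → Fin n → ℂ) (y : Fin m → ℝ) (lam mu : ℝ)
    (u v : Fin n → ℂ) : ℝ :=
  ∑ k, Complex.normSq ((y k : ℂ)
      - (1/2 : ℂ) * (cip u (f k) * cip (f k) v + cip v (f k) * cip (f k) u))
    + lam * cnSq u + mu * cnSq (u - v) + lam * cnSq v

section Aux
variable {n : ℕ}

lemma cip_eq_dot (a b : Fin n → ℂ) : cip a b = star b ⬝ᵥ a := by
  unfold cip dotProduct
  refine Finset.sum_congr rfl fun j _ => ?_
  simp only [Pi.star_apply, starRingEnd_apply]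
  exact mul_comm _ _

lemma conj_cip (a b : Fin n → ℂ) : (starRingEnd ℂ) (cip a b) = cip b a := by
  unfold cip
  rw [map_sum]
  refine Finset.sum_congr rfl fun j _ => ?_
  simp [mul_comm]

lemma vecMulVec_mulVec' (a b w : Fin n → ℂ) :
    Matrix.vecMulVec a b *ᵥ w = (b ⬝ᵥ w) • a := by
  ext i
  simp [Matrix.mulVec, Matrix.vecMulVec_apply, dotProduct, Finset.mul_sum, mul_comm, mul_assoc,
    mul_left_comm]

lemma symOuter_mulVec (u v w : Fin n → ℂ) :
    symOuter u v *ᵥ w = (1/2 : ℂ) • ((star v ⬝ᵥ w) • u + (star u ⬝ᵥ w) • v) := by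
  simp [symOuter, outer, Matrix.add_mulVec, Matrix.smul_mulVec, vecMulVec_mulVec']

lemma cip_symOuter (u v w : Fin n → ℂ) :
    cip (symOuter u v *ᵥ w) w
      = (1/2 : ℂ) * (cip u w * cip w v + cip v w * cip w u) := by
  rw [cip_eq_dot, symOuter_mulVec]
  simp only [dotProduct_smul, dotProduct_add, smul_eq_mul]
  rw [cip_eq_dot u w, cip_eq_dot v w, cip_eq_dot w v, cip_eq_dot w u]
  ring

lemma outer_conjTranspose (u v : Fin n → ℂ) : (outer u v)ᴴ = outer v u := by
  ext i j
  simp [outer, Matrix.conjTranspose_apply, Matrix.vecMulVec_apply, mul_comm]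

lemma symOuter_isHermitian (u v : Fin n → ℂ) : (symOuter u v).IsHermitian := by
  have h2 : star (1/2 : ℂ) = 1/2 := by simp
  rw [Matrix.IsHermitian, symOuter, Matrix.conjTranspose_smul, Matrix.conjTranspose_add,
    outer_conjTranspose, outer_conjTranspose, h2, add_comm (outer v u)]

lemma symOuter_self (x : Fin n → ℂ) : symOuter x x = outer x x := by
  unfold symOuter
  rw [← two_smul ℂ (outer x x), smul_smul]
  norm_num

end Aux
lemma eig_unique {n : ℕ} {W : Matrix (Fin n) (Fin n) ℂ} (hW : W.IsHermitian)
    (v : Fin n → ℂ)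
    (h0 : ∀ w : Fin n → ℂ, star v ⬝ᵥ w = 0 → star w ⬝ᵥ (W *ᵥ w) = 0)
    (s : ℝ) (i j : Fin n)
    (hi : 0 < s * hW.eigenvalues i) (hj : 0 < s * hW.eigenvalues j) : i = j := by
  by_contra hij
  set e : Fin n → Fin n → ℂ := fun k => ⇑(hW.eigenvectorBasis k) with he
  have horth : ∀ k l : Fin n, star (e k) ⬝ᵥ e l = if k = l then 1 else 0 := by
    intro k l
    have h := orthonormal_iff_ite.mp hW.eigenvectorBasis.orthonormal k l
    rw [EuclideanSpace.inner_eq_star_dotProduct] at h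
    rw [dotProduct_comm] at h
    exact h
  have hWe : ∀ k : Fin n, W *ᵥ e k = (hW.eigenvalues k : ℂ) • e k := by
    intro k
    rw [he]
    have h := hW.mulVec_eigenvectorBasis k
    rw [h]
    funext t
    simp [Complex.real_smul]
  set a := star v ⬝ᵥ e i with ha
  set b := star v ⬝ᵥ e j with hb
  obtain ⟨c, d, hcd, hne⟩ : ∃ c d : ℂ, c * a + d * b = 0 ∧ ¬(c = 0 ∧ d = 0) := by
    by_cases hab : a = 0 ∧ b = 0
    · exact ⟨1, 0, by rw [hab.1, hab.2]; ring, by simp⟩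
    · exact ⟨b, -a, by ring, fun h => hab ⟨by simpa using h.2, h.1⟩⟩
  set w : Fin n → ℂ := c • e i + d • e j with hw
  have hv0 : star v ⬝ᵥ w = 0 := by
    rw [hw, dotProduct_add, dotProduct_smul, dotProduct_smul, ← ha, ← hb]
    simpa using hcd
  have hq := h0 w hv0
  have hexp : star w ⬝ᵥ (W *ᵥ w)
      = ((Complex.normSq c * hW.eigenvalues i + Complex.normSq d * hW.eigenvalues j : ℝ) : ℂ) := by
    rw [hw, Matrix.mulVec_add, Matrix.mulVec_smul, Matrix.mulVec_smul, hWe i, hWe j]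
    simp only [star_add, star_smul, add_dotProduct, smul_dotProduct, dotProduct_add,
      dotProduct_smul, smul_smul, smul_eq_mul]
    rw [horth i i, horth i j, horth j i, horth j j, if_pos rfl, if_pos rfl,
      if_neg hij, if_neg (Ne.symm hij)]
    have hc : star c * c = (Complex.normSq c : ℂ) := by
      rw [mul_comm]; exact Complex.mul_conj c
    have hd : star d * d = (Complex.normSq d : ℂ) := by
      rw [mul_comm]; exact Complex.mul_conj d
    push_cast
    linear_combination ((hW.eigenvalues i : ℂ)) * hc + ((hW.eigenvalues j : ℂ)) * hd
  rw [hexp] at hq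
  have hzero : Complex.normSq c * hW.eigenvalues i + Complex.normSq d * hW.eigenvalues j = 0 :=
    mod_cast hq
  have e1 : Complex.normSq c * (s * hW.eigenvalues i) + Complex.normSq d * (s * hW.eigenvalues j)
      = 0 := by
    have : Complex.normSq c * (s * hW.eigenvalues i) + Complex.normSq d * (s * hW.eigenvalues j)
        = s * (Complex.normSq c * hW.eigenvalues i + Complex.normSq d * hW.eigenvalues j) := by
      ring
    rw [this, hzero, mul_zero]
  rcases not_and_or.mp hne with hc0 | hd0
  · have hcpos : 0 < Complex.normSq c := Complex.normSq_pos.mpr hc0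
    have := mul_pos hcpos hi
    have := mul_nonneg (Complex.normSq_nonneg d) hj.le
    linarith
  · have hdpos : 0 < Complex.normSq d := Complex.normSq_pos.mpr hd0
    have := mul_pos hdpos hj
    have := mul_nonneg (Complex.normSq_nonneg c) hi.le
    linarith
open Classical in
lemma posCount_le_one {n : ℕ} {W : Matrix (Fin n) (Fin n) ℂ} (hW : W.IsHermitian)
    (v : Fin n → ℂ)
    (h0 : ∀ w : Fin n → ℂ, star v ⬝ᵥ w = 0 → star w ⬝ᵥ (W *ᵥ w) = 0) :
    posCount hW ≤ 1 := by
  rw [posCount, Nat.card_eq_fintype_card, Fintype.card_le_one_iff_subsingleton]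
  refine ⟨fun p q => Subtype.ext ?_⟩
  exact eig_unique hW v h0 1 p.1 q.1 (by simpa using p.2) (by simpa using q.2)

open Classical in
lemma negCount_le_one {n : ℕ} {W : Matrix (Fin n) (Fin n) ℂ} (hW : W.IsHermitian)
    (v : Fin n → ℂ)
    (h0 : ∀ w : Fin n → ℂ, star v ⬝ᵥ w = 0 → star w ⬝ᵥ (W *ᵥ w) = 0) :
    negCount hW ≤ 1 := by
  rw [negCount, Nat.card_eq_fintype_card, Fintype.card_le_one_iff_subsingleton]
  refine ⟨fun p q => Subtype.ext ?_⟩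
  refine eig_unique hW v h0 (-1) p.1 q.1 ?_ ?_
  · have := p.2; nlinarith
  · have := q.2; nlinarith

lemma negCount_outer {n : ℕ} (x : Fin n → ℂ) (hY : (outer x x).IsHermitian) :
    negCount hY ≤ 0 := by
  have hnn : ∀ i, 0 ≤ hY.eigenvalues i := by
    intro i
    rw [hY.eigenvalues_eq]
    set e : Fin n → ℂ := ⇑(hY.eigenvectorBasis i) with he
    have h1 : outer x x *ᵥ e = (star x ⬝ᵥ e) • x := by
      rw [outer, vecMulVec_mulVec']
    rw [h1, dotProduct_smul, smul_eq_mul]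
    have hse : star e ⬝ᵥ x = star (star x ⬝ᵥ e) := by
      rw [Matrix.star_dotProduct]
    rw [hse]
    set z := star x ⬝ᵥ e with hz
    have : z * star z = (Complex.normSq z : ℂ) := Complex.mul_conj z
    rw [this]
    simp [Complex.normSq_nonneg]
  have hEmp : IsEmpty {i // hY.eigenvalues i < 0} :=
    ⟨fun p => absurd p.2 (not_lt.mpr (hnn p.1))⟩
  rw [negCount, Nat.card_of_isEmpty]

lemma trace_eq_sum_ev {n : ℕ} {W : Matrix (Fin n) (Fin n) ℂ} (hW : W.IsHermitian) :
    W.trace = ∑ i, (hW.eigenvalues i : ℂ) := by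
  conv_lhs => rw [hW.spectral_theorem]
  rw [Unitary.conjStarAlgAut_apply, Matrix.trace_mul_cycle, Matrix.UnitaryGroup.star_mul_self, Matrix.one_mul,
    Matrix.trace_diagonal]
  simp
lemma sqrt_add_le' (a b : ℝ) (ha : 0 ≤ a) (hb : 0 ≤ b) :
    Real.sqrt (a + b) ≤ Real.sqrt a + Real.sqrt b := by
  have h := Real.sqrt_le_sqrt (show a + b ≤ (Real.sqrt a + Real.sqrt b)^2 by
    nlinarith [Real.sq_sqrt ha, Real.sq_sqrt hb,
      mul_nonneg (Real.sqrt_nonneg a) (Real.sqrt_nonneg b)])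
  rwa [Real.sqrt_sq (by positivity)] at h

lemma normSq_sub' (a b : ℂ) :
    Complex.normSq (a - b)
      = Complex.normSq a + Complex.normSq b - 2 * (a * (starRingEnd ℂ) b).re := by
  simp [Complex.normSq_apply, Complex.sub_re, Complex.sub_im, Complex.mul_re,
    Complex.conj_re, Complex.conj_im]
  ring
set_option maxHeartbeats 1000000 in
/-- Suppose `A₃ > 0` satisfies `A₃‖X − Y‖₁² ≤ ‖A(X) − A(Y)‖²` for all
`X ∈ S^{1,1}`, `Y ∈ S^{1,0}`. Fix `λ, μ ≥ 0`, `x ∈ ℂⁿ`, `ν ∈ ℝᵐ` and `y = α(x) + ν`.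
If `J(u,v,λ,μ) ≤ J(x,x,λ,μ)` then
`‖[u,v] − xx*‖₁ ≤ 2λ/A₃ + 2√(λ²/A₃² + ‖ν‖²/A₃) ≤ 4λ/A₃ + 2‖ν‖/√A₃`. -/
theorem stmt19 (n m : ℕ) (f : Fin m → Fin n → ℂ)
    (hspan : Submodule.span ℂ (Set.range f) = ⊤)
    (A₃ : ℝ) (hA₃ : 0 < A₃)
    (hLip : ∀ (X Y : Matrix (Fin n) (Fin n) ℂ) (hX : X.IsHermitian) (hY : Y.IsHermitian)
        (hXY : (X - Y).IsHermitian),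
        posCount hX ≤ 1 → negCount hX ≤ 1 → posCount hY ≤ 1 → negCount hY ≤ 0 →
        A₃ * nucNorm hXY ^ 2 ≤ ∑ k, (AcMap f X k - AcMap f Y k) ^ 2)
    (lam mu : ℝ) (hlam : 0 ≤ lam) (hmu : 0 ≤ mu)
    (x : Fin n → ℂ) (ν y : Fin m → ℝ) (hy : y = fun k => alphaMap f x k + ν k)
    (u v : Fin n → ℂ)
    (hJ : Jfun f y lam mu u v ≤ Jfun f y lam mu x x)
    (huv : (symOuter u v - outer x x).IsHermitian) :
    nucNorm huv ≤ 2 * lam / A₃ + 2 * Real.sqrt (lam ^ 2 / A₃ ^ 2 + (∑ k, ν k ^ 2) / A₃)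
    ∧ 2 * lam / A₃ + 2 * Real.sqrt (lam ^ 2 / A₃ ^ 2 + (∑ k, ν k ^ 2) / A₃)
        ≤ 4 * lam / A₃ + 2 * Real.sqrt (∑ k, ν k ^ 2) / Real.sqrt A₃ := by
  have hXh : (symOuter u v).IsHermitian := symOuter_isHermitian u v
  have hYh : (outer x x).IsHermitian := by
    rw [← symOuter_self]; exact symOuter_isHermitian x x
  -- null-form conditions
  have h0X : ∀ w : Fin n → ℂ, star v ⬝ᵥ w = 0 → star w ⬝ᵥ (symOuter u v *ᵥ w) = 0 := by
    intro w hw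
    have hwv : cip w v = 0 := by rw [cip_eq_dot]; exact hw
    have hvw : cip v w = 0 := by rw [← conj_cip w v, hwv]; simp
    rw [← cip_eq_dot (symOuter u v *ᵥ w) w, cip_symOuter, hwv, hvw]; ring
  have h0Y : ∀ w : Fin n → ℂ, star x ⬝ᵥ w = 0 → star w ⬝ᵥ (outer x x *ᵥ w) = 0 := by
    intro w hw
    have hwv : cip w x = 0 := by rw [cip_eq_dot]; exact hw
    have hvw : cip x w = 0 := by rw [← conj_cip w x, hwv]; simp
    rw [← symOuter_self, ← cip_eq_dot (symOuter x x *ᵥ w) w, cip_symOuter, hwv, hvw]; ring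
  -- bracket is real, equal to AcMap of symOuter
  have hBc : ∀ k, ((AcMap f (symOuter u v) k : ℝ) : ℂ)
      = (1/2 : ℂ) * (cip u (f k) * cip (f k) v + cip v (f k) * cip (f k) u) := by
    intro k
    have h1 := cip_symOuter u v (f k)
    have hreal : (starRingEnd ℂ)
        ((1/2 : ℂ) * (cip u (f k) * cip (f k) v + cip v (f k) * cip (f k) u))
        = (1/2 : ℂ) * (cip u (f k) * cip (f k) v + cip v (f k) * cip (f k) u) := by
      rw [_root_.map_mul, _root_.map_add, _root_.map_mul, _root_.map_mul, conj_cip, conj_cip, conj_cip, conj_cip]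
      have h2 : (starRingEnd ℂ) (1/2 : ℂ) = 1/2 := by
        rw [starRingEnd_apply]; simp
      rw [h2]; ring
    have h2 : AcMap f (symOuter u v) k
        = ((1/2 : ℂ) * (cip u (f k) * cip (f k) v + cip v (f k) * cip (f k) u)).re := by
      show (cip ((symOuter u v).mulVec (f k)) (f k)).re = _
      rw [h1]
    rw [h2]
    exact Complex.conj_eq_iff_re.mp hreal
  -- AcMap of outer x x is alphaMap
  have halpha : ∀ k, AcMap f (outer x x) k = alphaMap f x k := by
    intro k
    show (cip ((outer x x).mulVec (f k)) (f k)).re = _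
    rw [← symOuter_self, cip_symOuter]
    have h3 : (1/2 : ℂ) * (cip x (f k) * cip (f k) x + cip x (f k) * cip (f k) x)
        = cip x (f k) * cip (f k) x := by ring
    rw [h3, ← conj_cip x (f k), Complex.mul_conj]
    simp [alphaMap]
  -- J computations
  have hJu : Jfun f y lam mu u v
      = (∑ k, (y k - AcMap f (symOuter u v) k) ^ 2)
        + lam * cnSq u + mu * cnSq (u - v) + lam * cnSq v := by
    rw [Jfun]
    have hsum : ∀ k, Complex.normSq ((y k : ℂ)
          - (1/2 : ℂ) * (cip u (f k) * cip (f k) v + cip v (f k) * cip (f k) u))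
        = (y k - AcMap f (symOuter u v) k) ^ 2 := by
      intro k
      rw [← hBc k, ← Complex.ofReal_sub, Complex.normSq_ofReal, sq]
    rw [Finset.sum_congr rfl fun k _ => hsum k]
  have hJx : Jfun f y lam mu x x = (∑ k, ν k ^ 2) + 2 * lam * cnSq x := by
    rw [Jfun]
    have hsum : ∀ k, Complex.normSq ((y k : ℂ)
          - (1/2 : ℂ) * (cip x (f k) * cip (f k) x + cip x (f k) * cip (f k) x))
        = ν k ^ 2 := by
      intro k
      have h3 : (1/2 : ℂ) * (cip x (f k) * cip (f k) x + cip x (f k) * cip (f k) x)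
          = ((alphaMap f x k : ℝ) : ℂ) := by
        have h4 : (1/2 : ℂ) * (cip x (f k) * cip (f k) x + cip x (f k) * cip (f k) x)
            = cip x (f k) * cip (f k) x := by ring
        rw [h4, ← conj_cip x (f k), Complex.mul_conj]
        rfl
      rw [h3, hy, ← Complex.ofReal_sub, Complex.normSq_ofReal]
      simp [sq]
    rw [Finset.sum_congr rfl fun k _ => hsum k]
    have h5 : cnSq (x - x) = 0 := by simp [cnSq]
    rw [h5]
    ring
  have hcn : ∀ a : Fin n → ℂ, 0 ≤ cnSq a :=
    fun a => Finset.sum_nonneg fun j _ => Complex.normSq_nonneg _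
  have hD : (∑ k, (y k - AcMap f (symOuter u v) k) ^ 2)
      ≤ (∑ k, ν k ^ 2) + 2 * lam * cnSq x - lam * cnSq u - lam * cnSq v := by
    rw [hJu, hJx] at hJ
    nlinarith [mul_nonneg hmu (hcn (u - v))]
  -- traces
  have htrX : (symOuter u v).trace = ((cip u v).re : ℂ) := by
    have h6 : (symOuter u v).trace = (1/2 : ℂ) * (cip u v + cip v u) := by
      rw [Matrix.trace, cip, cip, ← Finset.sum_add_distrib, Finset.mul_sum]
      refine Finset.sum_congr rfl fun i _ => ?_
      simp only [Matrix.diag_apply, symOuter, outer, Matrix.smul_apply, Matrix.add_apply,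
        Matrix.vecMulVec_apply, Pi.star_apply, smul_eq_mul, starRingEnd_apply]
    rw [h6, ← conj_cip u v, Complex.add_conj]
    push_cast
    ring
  have htrY : (outer x x).trace = (cnSq x : ℂ) := by
    rw [Matrix.trace, cnSq]
    push_cast
    refine Finset.sum_congr rfl fun i _ => ?_
    simp only [Matrix.diag_apply, outer, Matrix.vecMulVec_apply, Pi.star_apply,
      starRingEnd_apply]
    exact (Complex.mul_conj (x i)).symm ▸ rfl
  have htr : (cip u v).re - cnSq x = ∑ i, huv.eigenvalues i := by
    have h := trace_eq_sum_ev huv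
    rw [Matrix.trace_sub, htrX, htrY] at h
    exact_mod_cast h
  have habs : |∑ i, huv.eigenvalues i| ≤ nucNorm huv := Finset.abs_sum_le_sum_abs _ _
  have htrb : cnSq x - (cip u v).re ≤ nucNorm huv := by
    have h7 := neg_abs_le (∑ i, huv.eigenvalues i)
    linarith
  have hcs : 2 * (cip u v).re ≤ cnSq u + cnSq v := by
    have hre : (cip u v).re = ∑ j, (u j * (starRingEnd ℂ) (v j)).re := by
      rw [cip, Complex.re_sum]
    have hid : cnSq (u - v) = cnSq u + cnSq v - 2 * (cip u v).re := by
      rw [cnSq, cnSq, cnSq, hre, Finset.mul_sum, ← Finset.sum_add_distrib,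
        ← Finset.sum_sub_distrib]
      refine Finset.sum_congr rfl fun j _ => ?_
      have := normSq_sub' (u j) (v j)
      simpa using this
    linarith [hcn (u - v)]
  -- apply hLip
  have hlip := hLip (symOuter u v) (outer x x) hXh hYh huv
    (posCount_le_one hXh v h0X) (negCount_le_one hXh v h0X)
    (posCount_le_one hYh x h0Y) (negCount_outer x hYh)
  have hSb : ∑ k, (AcMap f (symOuter u v) k - AcMap f (outer x x) k) ^ 2
      ≤ ∑ k, (2 * (y k - AcMap f (symOuter u v) k) ^ 2 + 2 * ν k ^ 2) := by
    refine Finset.sum_le_sum fun k _ => ?_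
    have hyk : AcMap f (outer x x) k = y k - ν k := by rw [halpha k, hy]; simp
    rw [hyk]
    nlinarith [sq_nonneg (y k - AcMap f (symOuter u v) k - ν k),
      sq_nonneg (y k - AcMap f (symOuter u v) k + ν k)]
  have hsplit2 : ∑ k, (2 * (y k - AcMap f (symOuter u v) k) ^ 2 + 2 * ν k ^ 2)
      = 2 * (∑ k, (y k - AcMap f (symOuter u v) k) ^ 2) + 2 * (∑ k, ν k ^ 2) := by
    rw [Finset.sum_add_distrib, Finset.mul_sum, Finset.mul_sum]
  have hquad : A₃ * nucNorm huv ^ 2 ≤ 4 * (∑ k, ν k ^ 2) + 4 * lam * nucNorm huv := by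
    have h3 : 2 * cnSq x - cnSq u - cnSq v ≤ 2 * nucNorm huv := by linarith
    have h4 : lam * (2 * cnSq x - cnSq u - cnSq v) ≤ lam * (2 * nucNorm huv) :=
      mul_le_mul_of_nonneg_left h3 hlam
    nlinarith [hlip, hSb, hsplit2, hD]
  -- solve the quadratic
  have hδnn : 0 ≤ nucNorm huv := Finset.sum_nonneg fun i _ => abs_nonneg _
  have hN2 : 0 ≤ ∑ k, ν k ^ 2 := Finset.sum_nonneg fun k _ => sq_nonneg _
  have hRnn : 0 ≤ Real.sqrt (lam ^ 2 / A₃ ^ 2 + (∑ k, ν k ^ 2) / A₃) := Real.sqrt_nonneg _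
  have hR2 : Real.sqrt (lam ^ 2 / A₃ ^ 2 + (∑ k, ν k ^ 2) / A₃) ^ 2
      = lam ^ 2 / A₃ ^ 2 + (∑ k, ν k ^ 2) / A₃ := Real.sq_sqrt (by positivity)
  set R := Real.sqrt (lam ^ 2 / A₃ ^ 2 + (∑ k, ν k ^ 2) / A₃) with hRdef
  have hfirst : nucNorm huv ≤ 2 * lam / A₃ + 2 * R := by
    have h6 : 4 * A₃ ^ 2 * (lam ^ 2 / A₃ ^ 2 + (∑ k, ν k ^ 2) / A₃)
        = 4 * lam ^ 2 + 4 * A₃ * (∑ k, ν k ^ 2) := by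
      field_simp
    have hsq : (A₃ * nucNorm huv - 2 * lam) ^ 2 ≤ (2 * A₃ * R) ^ 2 := by
      have h7 : (2 * A₃ * R) ^ 2 = 4 * A₃ ^ 2 * R ^ 2 := by ring
      rw [h7, hR2, h6]
      nlinarith [mul_le_mul_of_nonneg_left hquad hA₃.le]
    have hle : A₃ * nucNorm huv - 2 * lam ≤ 2 * A₃ * R := by
      nlinarith [mul_nonneg (mul_nonneg (by norm_num : (0:ℝ) ≤ 2) hA₃.le) hRnn]
    rw [show 2 * lam / A₃ + 2 * R = (2 * lam + 2 * (A₃ * R)) / A₃ by field_simp]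
    rw [le_div_iff₀ hA₃]
    linarith
  refine ⟨hfirst, ?_⟩
  have h1 : R ≤ Real.sqrt (lam ^ 2 / A₃ ^ 2) + Real.sqrt ((∑ k, ν k ^ 2) / A₃) := by
    rw [hRdef]
    exact sqrt_add_le' _ _ (by positivity) (by positivity)
  have h2 : Real.sqrt (lam ^ 2 / A₃ ^ 2) = lam / A₃ := by
    rw [show lam ^ 2 / A₃ ^ 2 = (lam / A₃) ^ 2 by ring, Real.sqrt_sq (by positivity)]
  have h3 : Real.sqrt ((∑ k, ν k ^ 2) / A₃)
      = Real.sqrt (∑ k, ν k ^ 2) / Real.sqrt A₃ := Real.sqrt_div hN2 _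
  rw [h2, h3] at h1
  ring_nf at h1 ⊢
  linarith
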